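/- Let A, B, C be distinct subsets of {1,…,d} and let χ(S) ∈ {0,1}^d denote the characteristic vector of S ⊆ {1,…,d}. Then ⟨χ(A) − χ(C), χ(B) − χ(C)⟩ ≥ 0, and equality holds if and only if A ∩ B ⊆ C ⊆ A ∪ B. -/

import Mathlib

open RealInnerProductSpace

/-- The characteristic vector of a subset of `{1,…,d}` as a point of `ℝ^d`. -/
def chi {d : ℕ} (S : Finset (Fin d)) : EuclideanSpace ℝ (Fin d) :=
  WithLp.toLp 2 (fun i => if i ∈ S then 1 else 0)

theorem stmt_8 {d : ℕ} (A B C : Finset (Fin d))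
    (hAB : A ≠ B) (hAC : A ≠ C) (hBC : B ≠ C) :
    0 ≤ ⟪chi A - chi C, chi B - chi C⟫ ∧
    (⟪chi A - chi C, chi B - chi C⟫ = 0 ↔ A ∩ B ⊆ C ∧ C ⊆ A ∪ B) := by
  have key : ⟪chi A - chi C, chi B - chi C⟫ =
      ∑ i : Fin d, (chi A i - chi C i) * (chi B i - chi C i) := by
    simp [PiLp.inner_apply, RCLike.inner_apply]
    exact Finset.sum_congr rfl fun i _ => mul_comm _ _
  have hterm : ∀ i : Fin d, 0 ≤ (chi A i - chi C i) * (chi B i - chi C i) := by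
    intro i
    simp only [chi]
    by_cases hA : i ∈ A <;> by_cases hB : i ∈ B <;> by_cases hC : i ∈ C <;>
      simp [hA, hB, hC]
  have hnonneg : 0 ≤ ⟪chi A - chi C, chi B - chi C⟫ := by
    rw [key]; exact Finset.sum_nonneg fun i _ => hterm i
  refine ⟨hnonneg, ?_⟩
  rw [key, Finset.sum_eq_zero_iff_of_nonneg fun i _ => hterm i]
  constructor
  · intro h
    constructor
    · intro i hi
      have := h i (Finset.mem_univ i)
      simp only [Finset.mem_inter] at hi
      by_contra hC
      simp [chi, hi.1, hi.2, hC] at this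
    · intro i hi
      have := h i (Finset.mem_univ i)
      by_contra hAB'
      simp only [Finset.mem_union, not_or] at hAB'
      simp [chi, hAB'.1, hAB'.2, hi] at this
  · rintro ⟨h1, h2⟩ i _
    by_cases hA : i ∈ A <;> by_cases hB : i ∈ B <;> by_cases hC : i ∈ C <;>
      simp [chi, hA, hB, hC]
    · exact absurd (h1 (Finset.mem_inter.2 ⟨hA, hB⟩)) hC
    · exact absurd (Finset.mem_union.1 (h2 hC)) (by simp [hA, hB])
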